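/- arXiv:2409.14790 — 2 statements merged into one kernel-verified Lean document; each statement's English description precedes it below -/
import Mathlib

section
/- Assume the pencil (M,N) is self-adjoint with respect to P. Let x ∈ ℂ^n with Nx ≠ 0 and Mx ≠ rq_{M,N}(x)·Nx (x is not an eigenvector). Then rq_{M,N}(x) is real, qf_x(μ) is real for every real μ ≠ rq_{M,N}(x), the restriction of qf_x to ℝ is strictly increasing on (−∞, rq_{M,N}(x)) and on (rq_{M,N}(x), ∞), and one has the one-sided limits lim_{μ→rq_{M,N}(x)⁻} qf_x(μ) = rq_{M,N}(x) + r₀(x), lim_{μ→rq_{M,N}(x)⁺} qf_x(μ) = rq_{M,N}(x) − r₀(x), and lim_{μ→+∞} qf_x(μ) = lim_{μ→−∞} qf_x(μ) = rq_{M,N}(x). -/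
open Matrix Filter Topology
open scoped ComplexOrder

noncomputable def innerP {n : ℕ} (P : Matrix (Fin n) (Fin n) ℂ) (x y : Fin n → ℂ) : ℂ :=
  star y ⬝ᵥ P.mulVec x

noncomputable def normP {n : ℕ} (P : Matrix (Fin n) (Fin n) ℂ) (x : Fin n → ℂ) : ℝ :=
  Real.sqrt (innerP P x x).re

noncomputable def rq {n : ℕ} (M N P : Matrix (Fin n) (Fin n) ℂ) (x : Fin n → ℂ) : ℂ :=
  innerP P (M.mulVec x) (N.mulVec x) / innerP P (N.mulVec x) (N.mulVec x)

noncomputable def r0 {n : ℕ} (M N P : Matrix (Fin n) (Fin n) ℂ) (x : Fin n → ℂ) : ℝ :=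
  normP P (M.mulVec x - rq M N P x • N.mulVec x) / normP P (N.mulVec x)

noncomputable def qf {n : ℕ} (M N P : Matrix (Fin n) (Fin n) ℂ) (x : Fin n → ℂ) (μ : ℂ) : ℂ :=
  (innerP P ((M - μ • N).mulVec x) (N.mulVec x) /
      (‖innerP P ((M - μ • N).mulVec x) (N.mulVec x)‖ : ℂ)) *
    ((normP P ((M - μ • N).mulVec x) / normP P (N.mulVec x) : ℝ) : ℂ) + μ

def genSpec {n : ℕ} (M N : Matrix (Fin n) (Fin n) ℂ) : Set ℂ :=
  {l : ℂ | (M - l • N).det = 0}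

lemma innerP_add_left {n : ℕ} (P : Matrix (Fin n) (Fin n) ℂ) (u v w : Fin n → ℂ) :
    innerP P (u + v) w = innerP P u w + innerP P v w := by
  simp [innerP, mulVec_add, dotProduct_add]

lemma innerP_smul_left {n : ℕ} (P : Matrix (Fin n) (Fin n) ℂ) (c : ℂ) (u w : Fin n → ℂ) :
    innerP P (c • u) w = c * innerP P u w := by
  simp [innerP, mulVec_smul, dotProduct_smul, smul_eq_mul]

lemma innerP_sub_left {n : ℕ} (P : Matrix (Fin n) (Fin n) ℂ) (u v w : Fin n → ℂ) :
    innerP P (u - v) w = innerP P u w - innerP P v w := by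
  simp [innerP, mulVec_sub, dotProduct_sub]

lemma innerP_smul_right {n : ℕ} (P : Matrix (Fin n) (Fin n) ℂ) (c : ℂ) (u w : Fin n → ℂ) :
    innerP P u (c • w) = star c * innerP P u w := by
  simp [innerP, star_smul, smul_dotProduct, smul_eq_mul]

lemma innerP_add_right {n : ℕ} (P : Matrix (Fin n) (Fin n) ℂ) (u v w : Fin n → ℂ) :
    innerP P u (v + w) = innerP P u v + innerP P u w := by
  simp [innerP, star_add, add_dotProduct]

lemma innerP_conj {n : ℕ} {P : Matrix (Fin n) (Fin n) ℂ} (hP : P.IsHermitian)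
    (u v : Fin n → ℂ) : star (innerP P u v) = innerP P v u := by
  unfold innerP
  rw [star_dotProduct, star_star, star_mulVec, ← dotProduct_mulVec, hP.eq]

lemma herm_dot_im {n : ℕ} {A : Matrix (Fin n) (Fin n) ℂ} (hA : A.IsHermitian) (x : Fin n → ℂ) :
    (star x ⬝ᵥ A *ᵥ x).im = 0 := by
  rw [← Complex.conj_eq_iff_im]
  show star (star x ⬝ᵥ A *ᵥ x) = star x ⬝ᵥ A *ᵥ x
  conv_lhs => rw [star_dotProduct, star_star, star_mulVec, ← dotProduct_mulVec, hA.eq]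

lemma gStrictMono {R : ℝ} (hR : 0 < R) :
    StrictMono (fun t : ℝ => t - Real.sqrt (R + t ^ 2)) := by
  intro t₁ t₂ h
  simp only []
  set s₁ := Real.sqrt (R + t₁ ^ 2) with hs₁
  set s₂ := Real.sqrt (R + t₂ ^ 2) with hs₂
  have habs1 : |t₁| < s₁ := by
    rw [hs₁, ← Real.sqrt_sq_eq_abs]
    exact Real.sqrt_lt_sqrt (sq_nonneg _) (by nlinarith [sq_abs t₁])
  have habs2 : |t₂| < s₂ := by
    rw [hs₂, ← Real.sqrt_sq_eq_abs]
    exact Real.sqrt_lt_sqrt (sq_nonneg _) (by nlinarith [sq_abs t₂])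
  have hsq1 : s₁ ^ 2 = R + t₁ ^ 2 := Real.sq_sqrt (by nlinarith [sq_nonneg t₁])
  have hsq2 : s₂ ^ 2 = R + t₂ ^ 2 := Real.sq_sqrt (by nlinarith [sq_nonneg t₂])
  have h1 : t₁ < s₁ := lt_of_le_of_lt (le_abs_self _) habs1
  have h2 : t₂ < s₂ := lt_of_le_of_lt (le_abs_self _) habs2
  by_contra hc
  push_neg at hc
  have hd : t₂ - t₁ ≤ s₂ - s₁ := by linarith
  have hsum : 0 < s₁ + s₂ := by
    have := abs_nonneg t₁
    linarith
  nlinarith [mul_le_mul_of_nonneg_right hd hsum.le,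
    mul_pos (show (0:ℝ) < t₂ - t₁ by linarith) hsum]

lemma tendsto_sqrt_sub {R : ℝ} (hR : 0 ≤ R) :
    Tendsto (fun t : ℝ => Real.sqrt (R + t ^ 2) - t) atTop (𝓝 0) := by
  have hub : ∀ᶠ t : ℝ in atTop, Real.sqrt (R + t ^ 2) - t ≤ R / (2 * t) := by
    filter_upwards [eventually_gt_atTop (0 : ℝ)] with t ht
    have h1 : Real.sqrt (R + t ^ 2) ≤ t + R / (2 * t) := by
      rw [show t + R / (2 * t) = Real.sqrt ((t + R / (2 * t)) ^ 2) from
        (Real.sqrt_sq (by positivity)).symm]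
      apply Real.sqrt_le_sqrt
      have : 0 ≤ (R / (2 * t)) ^ 2 := sq_nonneg _
      have ht' : (2 * t) * (R / (2 * t)) = R := by field_simp
      nlinarith
    linarith
  have hlb : ∀ᶠ t : ℝ in atTop, 0 ≤ Real.sqrt (R + t ^ 2) - t := by
    filter_upwards [eventually_gt_atTop (0 : ℝ)] with t ht
    have : t ≤ Real.sqrt (R + t ^ 2) := by
      nlinarith [Real.sq_sqrt (by positivity : (0:ℝ) ≤ R + t ^ 2),
        Real.sqrt_nonneg (R + t ^ 2), sq_nonneg (Real.sqrt (R + t ^ 2) - t)]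
    linarith
  have hq : Tendsto (fun t : ℝ => R / (2 * t)) atTop (𝓝 0) := by
    apply Tendsto.div_atTop (tendsto_const_nhds)
    exact Tendsto.const_mul_atTop (by norm_num) tendsto_id
  exact tendsto_of_tendsto_of_tendsto_of_le_of_le' tendsto_const_nhds hq hlb hub

lemma inner_MN {n : ℕ} (M N P : Matrix (Fin n) (Fin n) ℂ) (x : Fin n → ℂ) :
    innerP P (M.mulVec x) (N.mulVec x) = star x ⬝ᵥ (Nᴴ * P * M) *ᵥ x := by
  unfold innerP
  rw [star_mulVec, ← dotProduct_mulVec, mulVec_mulVec, mulVec_mulVec]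


/-- in the self-adjoint case, the quotient function restricted to the reals
is real-valued, strictly increasing on both sides of the Rayleigh quotient, with the stated
one-sided limits at the Rayleigh quotient and at `±∞`. -/
theorem stmt_7 {n : ℕ} (hn : 1 ≤ n) (M N P : Matrix (Fin n) (Fin n) ℂ)
    (hP : P.PosDef) (hsa : (Nᴴ * P * M).IsHermitian)
    (x : Fin n → ℂ) (hx : N.mulVec x ≠ 0)
    (hev : M.mulVec x ≠ rq M N P x • N.mulVec x) :
    (rq M N P x).im = 0 ∧
    (∀ μ : ℝ, (μ : ℂ) ≠ rq M N P x → (qf M N P x μ).im = 0) ∧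
    StrictMonoOn (fun μ : ℝ => (qf M N P x μ).re) (Set.Iio (rq M N P x).re) ∧
    StrictMonoOn (fun μ : ℝ => (qf M N P x μ).re) (Set.Ioi (rq M N P x).re) ∧
    Tendsto (fun μ : ℝ => (qf M N P x μ).re) (𝓝[<] (rq M N P x).re)
      (𝓝 ((rq M N P x).re + r0 M N P x)) ∧
    Tendsto (fun μ : ℝ => (qf M N P x μ).re) (𝓝[>] (rq M N P x).re)
      (𝓝 ((rq M N P x).re - r0 M N P x)) ∧
    Tendsto (fun μ : ℝ => (qf M N P x μ).re) atTop (𝓝 ((rq M N P x).re)) ∧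
    Tendsto (fun μ : ℝ => (qf M N P x μ).re) atBot (𝓝 ((rq M N P x).re)) := by
  classical
  have hPH : P.IsHermitian := hP.1
  have hself : ∀ v : Fin n → ℂ, (innerP P v v).im = 0 := fun v => herm_dot_im hPH v
  have hposre : ∀ v : Fin n → ℂ, v ≠ 0 → 0 < (innerP P v v).re := by
    intro v hv
    have := hP.re_dotProduct_pos hv
    simpa [innerP] using this
  set Nx := N.mulVec x with hNx
  set s : ℝ := (innerP P Nx Nx).re with hs_def
  have hs : 0 < s := hposre Nx hx
  have hsC : innerP P Nx Nx = (s : ℂ) := by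
    apply Complex.ext
    · simp [hs_def]
    · simp [hself]
  set a : ℂ := innerP P (M.mulVec x) Nx with ha_def
  have ha_im : a.im = 0 := by
    rw [ha_def, hNx, inner_MN]
    exact herm_dot_im hsa x
  have haC : a = ((a.re : ℝ) : ℂ) := by
    apply Complex.ext
    · simp
    · simp [ha_im]
  set ρ : ℝ := a.re / s with hρ_def
  have hrq : rq M N P x = (ρ : ℂ) := by
    unfold rq
    rw [← hNx, ← ha_def, ← hs_def] at *
    rw [hsC]
    conv_lhs => rw [haC]
    rw [hρ_def]
    norm_cast
  have hrq_re : (rq M N P x).re = ρ := by rw [hrq]; simp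
  have hρs : ρ * s = a.re := by rw [hρ_def, div_mul_cancel₀ _ hs.ne']
  set y := M.mulVec x - ((ρ : ℝ) : ℂ) • Nx with hy_def
  have hy : y ≠ 0 := by
    intro h
    apply hev
    rw [hrq]
    rw [hy_def, sub_eq_zero] at h
    exact h
  set r2 : ℝ := (innerP P y y).re with hr2_def
  have hr2 : 0 < r2 := hposre y hy
  have hr2C : innerP P y y = (r2 : ℂ) := by
    apply Complex.ext
    · simp [hr2_def]
    · simp [hself]
  have horth : innerP P y Nx = 0 := by
    rw [hy_def, innerP_sub_left, innerP_smul_left, hsC, ← ha_def]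
    conv_lhs => rw [haC]
    rw [← hρs]
    push_cast
    ring
  have horth' : innerP P Nx y = 0 := by
    rw [← innerP_conj hPH, horth, star_zero]
  have hvec : ∀ μ : ℝ, (M - ((μ : ℝ) : ℂ) • N).mulVec x = y + ((ρ - μ : ℝ) : ℂ) • Nx := by
    intro μ
    rw [sub_mulVec, smul_mulVec, hy_def, ← hNx]
    push_cast
    module
  have hc : ∀ μ : ℝ, innerP P ((M - ((μ : ℝ) : ℂ) • N).mulVec x) Nx
      = (((ρ - μ) * s : ℝ) : ℂ) := by
    intro μ
    rw [hvec μ, innerP_add_left, innerP_smul_left, horth, hsC]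
    push_cast
    ring
  have hn2 : ∀ μ : ℝ, innerP P ((M - ((μ : ℝ) : ℂ) • N).mulVec x)
      ((M - ((μ : ℝ) : ℂ) • N).mulVec x) = ((r2 + (ρ - μ) ^ 2 * s : ℝ) : ℂ) := by
    intro μ
    rw [hvec μ, innerP_add_left, innerP_add_right, innerP_add_right,
      innerP_smul_left, innerP_smul_right, innerP_smul_right, innerP_smul_left,
      horth, horth', hr2C, hsC]
    simp only [Complex.star_def, map_sub, Complex.conj_ofReal]
    push_cast
    ring
  have hnormv : ∀ μ : ℝ, normP P ((M - ((μ : ℝ) : ℂ) • N).mulVec x)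
      = Real.sqrt (r2 + (ρ - μ) ^ 2 * s) := by
    intro μ
    unfold normP
    rw [hn2 μ, Complex.ofReal_re]
  have hnormNx : normP P Nx = Real.sqrt s := by
    unfold normP
    rw [← hs_def]
  set R : ℝ := r2 / s with hR_def
  have hR : 0 < R := div_pos hr2 hs
  have hr0 : r0 M N P x = Real.sqrt R := by
    unfold r0
    rw [hrq, ← hNx, ← hy_def, hnormNx]
    unfold normP
    rw [← hr2_def, hR_def, Real.sqrt_div hr2.le]
  have hqf : ∀ μ : ℝ, μ ≠ ρ →
      qf M N P x ((μ : ℝ) : ℂ)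
        = ((((ρ - μ) / |ρ - μ|) * Real.sqrt (R + (ρ - μ) ^ 2) + μ : ℝ) : ℂ) := by
    intro μ hμ
    have ht : ρ - μ ≠ 0 := sub_ne_zero.mpr (Ne.symm hμ)
    have habs : |ρ - μ| ≠ 0 := abs_ne_zero.mpr ht
    unfold qf
    rw [← hNx, hc μ, hnormv μ, hnormNx, Complex.norm_real, Real.norm_eq_abs]
    have key : ((ρ - μ) * s) / |(ρ - μ) * s| * (Real.sqrt (r2 + (ρ - μ) ^ 2 * s) / Real.sqrt s)
        = ((ρ - μ) / |ρ - μ|) * Real.sqrt (R + (ρ - μ) ^ 2) := by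
      rw [abs_mul, abs_of_pos hs]
      rw [show Real.sqrt (r2 + (ρ - μ) ^ 2 * s) / Real.sqrt s
          = Real.sqrt ((r2 + (ρ - μ) ^ 2 * s) / s) from (Real.sqrt_div (by positivity) s).symm]
      rw [show (r2 + (ρ - μ) ^ 2 * s) / s = R + (ρ - μ) ^ 2 by
        rw [hR_def]; field_simp]
      congr 1
      field_simp
    rw [← key]
    push_cast
    ring
  have hlt : ∀ μ : ℝ, μ < ρ →
      (qf M N P x ((μ : ℝ) : ℂ)).re = μ + Real.sqrt (R + (ρ - μ) ^ 2) := by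
    intro μ h
    rw [hqf μ (ne_of_lt h), Complex.ofReal_re,
      abs_of_pos (by linarith : (0:ℝ) < ρ - μ), div_self (by linarith : ρ - μ ≠ 0)]
    ring
  have hgt : ∀ μ : ℝ, ρ < μ →
      (qf M N P x ((μ : ℝ) : ℂ)).re = μ - Real.sqrt (R + (μ - ρ) ^ 2) := by
    intro μ h
    rw [hqf μ (ne_of_gt h), Complex.ofReal_re]
    have h1 : (ρ - μ) / |ρ - μ| = -1 := by
      rw [abs_of_neg (by linarith : ρ - μ < 0), div_neg,
        div_self (sub_ne_zero.mpr (ne_of_lt h))]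
    have h2 : (ρ - μ) ^ 2 = (μ - ρ) ^ 2 := by ring
    rw [h1, h2]
    ring
  refine ⟨?_, ?_, ?_, ?_, ?_, ?_, ?_, ?_⟩
  · rw [hrq]; simp
  · intro μ hne
    have hμρ : μ ≠ ρ := fun h => hne (by rw [h, hrq])
    rw [hqf μ hμρ]
    simp
  · rw [hrq_re]
    intro p hp q hq hpq
    simp only [Set.mem_Iio] at hp hq
    simp only []
    rw [hlt p hp, hlt q hq]
    have := gStrictMono hR (show ρ - q < ρ - p by linarith)
    simp only [] at this
    linarith
  · rw [hrq_re]
    intro p hp q hq hpq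
    simp only [Set.mem_Ioi] at hp hq
    simp only []
    rw [hgt p hp, hgt q hq]
    have := gStrictMono hR (show p - ρ < q - ρ by linarith)
    simp only [] at this
    linarith
  · rw [hrq_re, hr0]
    have hcont : Tendsto (fun μ : ℝ => μ + Real.sqrt (R + (ρ - μ) ^ 2)) (𝓝 ρ)
        (𝓝 (ρ + Real.sqrt R)) := by
      have hC : Continuous fun μ : ℝ => μ + Real.sqrt (R + (ρ - μ) ^ 2) := by
        fun_prop
      have := hC.tendsto ρ
      simpa using this
    apply Tendsto.congr' _ (hcont.mono_left nhdsWithin_le_nhds)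
    filter_upwards [self_mem_nhdsWithin] with μ hμ
    exact (hlt μ hμ).symm
  · rw [hrq_re, hr0]
    have hcont : Tendsto (fun μ : ℝ => μ - Real.sqrt (R + (μ - ρ) ^ 2)) (𝓝 ρ)
        (𝓝 (ρ - Real.sqrt R)) := by
      have hC : Continuous fun μ : ℝ => μ - Real.sqrt (R + (μ - ρ) ^ 2) := by
        fun_prop
      have := hC.tendsto ρ
      simpa using this
    apply Tendsto.congr' _ (hcont.mono_left nhdsWithin_le_nhds)
    filter_upwards [self_mem_nhdsWithin] with μ hμ
    exact (hgt μ hμ).symm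
  · rw [hrq_re]
    have h1 : Tendsto (fun μ : ℝ => Real.sqrt (R + (μ - ρ) ^ 2) - (μ - ρ)) atTop (𝓝 0) := by
      have hm : Tendsto (fun μ : ℝ => μ - ρ) atTop atTop := by
        simpa [sub_eq_add_neg] using tendsto_atTop_add_const_right atTop (-ρ) tendsto_id
      have := (tendsto_sqrt_sub hR.le).comp hm
      simpa [Function.comp_def] using this
    have h2 : Tendsto (fun μ : ℝ => ρ - (Real.sqrt (R + (μ - ρ) ^ 2) - (μ - ρ))) atTop
        (𝓝 ρ) := by
      have := (tendsto_const_nhds (x := ρ) (f := atTop (α := ℝ))).sub h1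
      simpa using this
    apply Tendsto.congr' _ h2
    filter_upwards [eventually_gt_atTop ρ] with μ hμ
    rw [hgt μ hμ]
    ring
  · rw [hrq_re]
    have hm : Tendsto (fun μ : ℝ => ρ - μ) atBot atTop := by
      simpa [sub_eq_add_neg] using
        tendsto_atTop_add_const_left atBot ρ (tendsto_neg_atBot_atTop (G := ℝ))
    have h1 : Tendsto (fun μ : ℝ => Real.sqrt (R + (ρ - μ) ^ 2) - (ρ - μ)) atBot (𝓝 0) := by
      have := (tendsto_sqrt_sub hR.le).comp hm
      simpa [Function.comp_def] using this
    have h2 : Tendsto (fun μ : ℝ => ρ + (Real.sqrt (R + (ρ - μ) ^ 2) - (ρ - μ))) atBot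
        (𝓝 ρ) := by
      have := (tendsto_const_nhds (x := ρ) (f := atBot (α := ℝ))).add h1
      simpa using this
    apply Tendsto.congr' _ h2
    filter_upwards [eventually_lt_atBot ρ] with μ hμ
    rw [hlt μ hμ]
    ring
end

section
/- Assume the pencil (M,N) is self-adjoint with respect to P and N is invertible, so Λ(M,N) is a nonempty set of real numbers. Then for every μ ∈ ℝ and every x ∈ ℂ^n, (min{|λ − μ| : λ ∈ Λ(M,N)})·‖Nx‖_P ≤ ‖(M−μN)x‖_P ≤ (max{|λ − μ| : λ ∈ Λ(M,N)})·‖Nx‖_P. -/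
open Matrix Filter Topology
open scoped ComplexOrder

lemma dot_unitary {n : ℕ} (V : Matrix (Fin n) (Fin n) ℂ)
    (hV : V ∈ Matrix.unitaryGroup (Fin n) ℂ) (y : Fin n → ℂ) :
    star (V *ᵥ y) ⬝ᵥ (V *ᵥ y) = star y ⬝ᵥ y := by
  rw [star_mulVec, dotProduct_mulVec, vecMul_vecMul,
    show Vᴴ * V = 1 from mem_unitaryGroup_iff'.mp hV, vecMul_one]

lemma re_star_dot {n : ℕ} (z : Fin n → ℂ) :
    (star z ⬝ᵥ z).re = ∑ i, Complex.normSq (z i) := by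
  simp only [dotProduct, Pi.star_apply, Complex.re_sum]
  refine Finset.sum_congr rfl fun i _ => ?_
  rw [Complex.star_def, ← Complex.normSq_eq_conj_mul_self]
  simp

/-- two-sided bounds `min_λ |λ−μ|·‖Nx‖_P ≤ ‖(M−μN)x‖_P ≤ max_λ |λ−μ|·‖Nx‖_P`
for a self-adjoint pencil with invertible `N`. -/
theorem stmt_19 {n : ℕ} (hn : 1 ≤ n) (M N P : Matrix (Fin n) (Fin n) ℂ)
    (hP : P.PosDef) (hsa : (Nᴴ * P * M).IsHermitian) (hN : IsUnit N)
    (μ : ℝ) (x : Fin n → ℂ) :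
    sInf ((fun l : ℝ => |l - μ|) '' {l : ℝ | (l : ℂ) ∈ genSpec M N}) *
        normP P (N.mulVec x) ≤ normP P ((M - (μ : ℂ) • N).mulVec x) ∧
    normP P ((M - (μ : ℂ) • N).mulVec x) ≤
      sSup ((fun l : ℝ => |l - μ|) '' {l : ℝ | (l : ℂ) ∈ genSpec M N}) *
        normP P (N.mulVec x) := by
  classical
  -- square root of P
  obtain ⟨L, hLH, hLL⟩ : ∃ L : Matrix (Fin n) (Fin n) ℂ, Lᴴ = L ∧ L * L = P := by
    open scoped MatrixOrder in
    exact ⟨CFC.sqrt P, (CFC.sqrt_nonneg P).posSemidef.1,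
      CFC.sqrt_mul_sqrt_self P hP.posSemidef.nonneg⟩
  have hdetL : IsUnit L.det := by
    have h : L.det * L.det = P.det := by rw [← det_mul, hLL]
    refine isUnit_iff_ne_zero.mpr fun h0 => hP.det_pos.ne' ?_
    rw [← h, h0, mul_zero]
  have hdetN : IsUnit N.det := (Matrix.isUnit_iff_isUnit_det N).mp hN
  have hLL' : L * L⁻¹ = 1 := mul_nonsing_inv L hdetL
  have hL'L : L⁻¹ * L = 1 := nonsing_inv_mul L hdetL
  have hNN' : N * N⁻¹ = 1 := mul_nonsing_inv N hdetN
  have hN'N : N⁻¹ * N = 1 := nonsing_inv_mul N hdetN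
  set A := M * N⁻¹ with hAdef
  set B := L * A * L⁻¹ with hBdef
  -- self-adjointness transfers
  have hkey : Mᴴ * P * N = Nᴴ * P * M := by
    have := hsa.eq
    calc Mᴴ * P * N = (Nᴴ * P * M)ᴴ := by
          simp [conjTranspose_mul, hP.isHermitian.eq, mul_assoc]
      _ = Nᴴ * P * M := hsa.eq
  have hPA : Aᴴ * P = P * A := by
    have h1 : Mᴴ * P = Nᴴ * P * M * N⁻¹ := by
      calc Mᴴ * P = Mᴴ * P * N * N⁻¹ := by rw [mul_assoc, hNN', mul_one]
        _ = Nᴴ * P * M * N⁻¹ := by rw [hkey]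
    calc Aᴴ * P = N⁻¹ᴴ * (Mᴴ * P) := by rw [hAdef, conjTranspose_mul, mul_assoc]
      _ = N⁻¹ᴴ * Nᴴ * (P * M * N⁻¹) := by rw [h1]; rw [mul_assoc, mul_assoc, mul_assoc, mul_assoc]
      _ = (N * N⁻¹)ᴴ * (P * M * N⁻¹) := by rw [conjTranspose_mul]
      _ = P * A := by rw [hNN', conjTranspose_one, one_mul, hAdef, mul_assoc]
  have hB : B.IsHermitian := by
    have hinv : L⁻¹ᴴ = L⁻¹ := by rw [conjTranspose_nonsing_inv, hLH]
    have h2 : Aᴴ * (L * L) = L * L * A := by rw [hLL, hPA]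
    show Bᴴ = B
    calc Bᴴ = L⁻¹ * (Aᴴ * L) := by
          rw [hBdef, conjTranspose_mul, conjTranspose_mul, hinv, hLH]
      _ = L⁻¹ * (Aᴴ * L) * (L * L⁻¹) := by rw [hLL', mul_one]
      _ = L⁻¹ * (Aᴴ * (L * L)) * L⁻¹ := by noncomm_ring
      _ = L⁻¹ * (L * L * A) * L⁻¹ := by rw [h2]
      _ = (L⁻¹ * L) * (L * A * L⁻¹) := by noncomm_ring
      _ = B := by rw [hL'L, one_mul, hBdef]
  -- spectral decomposition of B
  set ev := hB.eigenvalues with hev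
  set U : Matrix (Fin n) (Fin n) ℂ := (hB.eigenvectorUnitary : Matrix (Fin n) (Fin n) ℂ)
    with hUdef
  have hU : U ∈ Matrix.unitaryGroup (Fin n) ℂ := hB.eigenvectorUnitary.2
  have hUU : U * star U = 1 := mem_unitaryGroup_iff.mp hU
  have hU'U : star U * U = 1 := mem_unitaryGroup_iff'.mp hU
  have hco : ∀ r : ℝ, (RCLike.ofReal r : ℂ) = (r : ℂ) := fun r => rfl
  have hspec : B = U * diagonal (fun i => ((ev i : ℝ) : ℂ)) * star U := hB.spectral_theorem
  have hBc : ∀ c : ℝ, B - (c : ℂ) • 1 =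
      U * diagonal (fun i => ((ev i - c : ℝ) : ℂ)) * star U := by
    intro c
    have hd : diagonal (fun i => ((ev i - c : ℝ) : ℂ)) =
        diagonal (fun i => ((ev i : ℝ) : ℂ)) - (c : ℂ) • 1 := by
      ext i j
      rcases eq_or_ne i j with rfl | hij
      · simp [Matrix.sub_apply, Matrix.smul_apply, Matrix.diagonal_apply_eq,
          Matrix.one_apply_eq, Complex.ofReal_sub]
      · simp [Matrix.sub_apply, Matrix.smul_apply, Matrix.diagonal_apply_ne _ hij,
          Matrix.one_apply_ne hij]
    rw [hd, mul_sub, sub_mul, ← hspec]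
    congr 1
    rw [Matrix.mul_smul, mul_one, Matrix.smul_mul, hUU]
  have hdetB : ∀ c : ℝ, (B - (c : ℂ) • 1).det = ∏ i, ((ev i - c : ℝ) : ℂ) := by
    intro c
    rw [hBc c, det_mul, det_mul, det_diagonal]
    have h1 : U.det * (star U).det = 1 := by rw [← det_mul, hUU, det_one]
    rw [mul_comm U.det _, mul_assoc, h1, mul_one]
  have hAN : A * N = M := by rw [hAdef, mul_assoc, hN'N, mul_one]
  have hBL : B * L = L * A := by rw [hBdef, mul_assoc, hL'L, mul_one]
  have hLMN : ∀ c : ℝ, L * (M - (c : ℂ) • N) = (B - (c : ℂ) • 1) * (L * N) := by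
    intro c
    calc L * (M - (c : ℂ) • N) = L * M - (c : ℂ) • (L * N) := by
          rw [mul_sub, Matrix.mul_smul]
      _ = (B - (c : ℂ) • 1) * (L * N) := by
          rw [sub_mul, Matrix.smul_mul, one_mul, ← mul_assoc, hBL, mul_assoc, hAN]
  have hL0 : L.det ≠ 0 := hdetL.ne_zero
  have hN0 : N.det ≠ 0 := hdetN.ne_zero
  have hiff : ∀ c : ℝ, (M - (c : ℂ) • N).det = 0 ↔ ∃ i, ev i = c := by
    intro c
    have hdeteq : L.det * (M - (c : ℂ) • N).det =
        (B - (c : ℂ) • 1).det * (L.det * N.det) := by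
      have h := congrArg det (hLMN c)
      rwa [det_mul, det_mul, det_mul] at h
    have h2 : (M - (c : ℂ) • N).det = 0 ↔ (B - (c : ℂ) • 1).det = 0 := by
      constructor
      · intro h
        rw [h, mul_zero] at hdeteq
        rcases mul_eq_zero.mp hdeteq.symm with h' | h'
        · exact h'
        · exact absurd h' (by simp [hL0, hN0])
      · intro h
        rw [h, zero_mul] at hdeteq
        rcases mul_eq_zero.mp hdeteq with h' | h'
        · exact absurd h' hL0
        · exact h'
    rw [h2, hdetB c, Finset.prod_eq_zero_iff]
    constructor
    · rintro ⟨i, -, hi⟩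
      exact ⟨i, by have := Complex.ofReal_eq_zero.mp hi; linarith⟩
    · rintro ⟨i, hi⟩
      exact ⟨i, Finset.mem_univ i, by rw [hi]; simp⟩
  have hspecset : {l : ℝ | (l : ℂ) ∈ genSpec M N} = Set.range ev := by
    ext c
    simp only [genSpec, Set.mem_setOf_eq, Set.mem_range, hiff c]
  -- norms via L and U
  have hnormP : ∀ z : Fin n → ℂ, normP P z =
      Real.sqrt (∑ i, Complex.normSq ((L *ᵥ z) i)) := by
    intro z
    have h1 : innerP P z z = star (L *ᵥ z) ⬝ᵥ (L *ᵥ z) := by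
      rw [innerP, star_mulVec, hLH, ← hLL, ← Matrix.mulVec_mulVec, dotProduct_mulVec]
    rw [normP, h1, re_star_dot]
  set y := L *ᵥ (N *ᵥ x) with hy
  set w := star U *ᵥ y with hw
  have hyw : U *ᵥ w = y := by rw [hw, Matrix.mulVec_mulVec, hUU, one_mulVec]
  have hnormy : normP P (N *ᵥ x) = Real.sqrt (∑ i, Complex.normSq (w i)) := by
    rw [hnormP, ← hy, ← hyw, ← re_star_dot, dot_unitary U hU, re_star_dot]
  have hLv : L *ᵥ ((M - (μ : ℂ) • N) *ᵥ x) =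
      U *ᵥ (diagonal (fun i => ((ev i - μ : ℝ) : ℂ)) *ᵥ w) := by
    rw [Matrix.mulVec_mulVec, hLMN μ, ← Matrix.mulVec_mulVec,
      show (L * N) *ᵥ x = y from (Matrix.mulVec_mulVec x L N).symm ▸ hy.symm, hBc μ,
      ← Matrix.mulVec_mulVec, ← Matrix.mulVec_mulVec, ← hw]
  have hnormMu : normP P ((M - (μ : ℂ) • N) *ᵥ x) =
      Real.sqrt (∑ i, (ev i - μ) ^ 2 * Complex.normSq (w i)) := by
    rw [hnormP, hLv, ← re_star_dot, dot_unitary U hU, re_star_dot]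
    congr 1
    refine Finset.sum_congr rfl fun i _ => ?_
    rw [mulVec_diagonal, Complex.normSq_mul, Complex.normSq_ofReal]
    ring
  rw [hspecset]
  set T := (fun l : ℝ => |l - μ|) '' Set.range ev with hT
  have hTfin : T.Finite := (Set.finite_range ev).image _
  have hTne : T.Nonempty := ⟨|ev ⟨0, hn⟩ - μ|, ⟨ev ⟨0, hn⟩, ⟨⟨0, hn⟩, rfl⟩, rfl⟩⟩
  have hmmem : sInf T ∈ T := hTne.csInf_mem hTfin
  have hKmem : sSup T ∈ T := hTne.csSup_mem hTfin
  have hm0 : 0 ≤ sInf T := by obtain ⟨l, -, hl⟩ := hmmem; rw [← hl]; exact abs_nonneg _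
  have hK0 : 0 ≤ sSup T := by obtain ⟨l, -, hl⟩ := hKmem; rw [← hl]; exact abs_nonneg _
  have hmle : ∀ i, sInf T ≤ |ev i - μ| := fun i =>
    csInf_le hTfin.bddBelow ⟨ev i, ⟨i, rfl⟩, rfl⟩
  have hleK : ∀ i, |ev i - μ| ≤ sSup T := fun i =>
    le_csSup hTfin.bddAbove ⟨ev i, ⟨i, rfl⟩, rfl⟩
  have hsum1 : (sInf T) ^ 2 * ∑ i, Complex.normSq (w i) ≤
      ∑ i, (ev i - μ) ^ 2 * Complex.normSq (w i) := by
    rw [Finset.mul_sum]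
    refine Finset.sum_le_sum fun i _ => ?_
    have h : (sInf T) ^ 2 ≤ (ev i - μ) ^ 2 := by
      rw [← sq_abs (ev i - μ)]
      exact pow_le_pow_left₀ hm0 (hmle i) 2
    exact mul_le_mul_of_nonneg_right h (Complex.normSq_nonneg _)
  have hsum2 : ∑ i, (ev i - μ) ^ 2 * Complex.normSq (w i) ≤
      (sSup T) ^ 2 * ∑ i, Complex.normSq (w i) := by
    rw [Finset.mul_sum]
    refine Finset.sum_le_sum fun i _ => ?_
    have h : (ev i - μ) ^ 2 ≤ (sSup T) ^ 2 := by
      rw [← sq_abs (ev i - μ)]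
      exact pow_le_pow_left₀ (abs_nonneg _) (hleK i) 2
    exact mul_le_mul_of_nonneg_right h (Complex.normSq_nonneg _)
  constructor
  · rw [hnormy, hnormMu]
    calc sInf T * Real.sqrt (∑ i, Complex.normSq (w i))
        = Real.sqrt ((sInf T) ^ 2 * ∑ i, Complex.normSq (w i)) := by
          rw [Real.sqrt_mul (sq_nonneg _), Real.sqrt_sq hm0]
      _ ≤ _ := Real.sqrt_le_sqrt hsum1
  · rw [hnormy, hnormMu]
    calc Real.sqrt (∑ i, (ev i - μ) ^ 2 * Complex.normSq (w i))
        ≤ Real.sqrt ((sSup T) ^ 2 * ∑ i, Complex.normSq (w i)) := Real.sqrt_le_sqrt hsum2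
      _ = sSup T * Real.sqrt (∑ i, Complex.normSq (w i)) := by
          rw [Real.sqrt_mul (sq_nonneg _), Real.sqrt_sq hK0]
end
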